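/- Let α ∈ [0,1), let s ≥ 1 be an integer, and set n = s + ⌊3s/2⌋ + 1. Then the A_α-spectral radius of G = K_s ∨ ((⌊3s/2⌋+1)K₁) equals the largest real root of x² − (αn + s − 1)x + (2α−1)s⌊3s/2⌋ + αs² + αs − s = 0; equivalently, ρ_α(G) = (αn + s − 1 + √((αn+s−1)² − 4((2α−1)s⌊3s/2⌋ + αs² + αs − s)))/2. -/

import Mathlib

open Finset

/-- The join `G ∨g H` of two graphs: the disjoint union together with all edges
between the two parts. -/
def SimpleGraph.gjoin {α β : Type*} (G : SimpleGraph α) (H : SimpleGraph β) :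
    SimpleGraph (α ⊕ β) where
  Adj u v := match u, v with
    | Sum.inl u, Sum.inl v => G.Adj u v
    | Sum.inr u, Sum.inr v => H.Adj u v
    | _, _ => True
  symm := ⟨fun u v => match u, v with
    | Sum.inl u, Sum.inl v => G.adj_symm
    | Sum.inr u, Sum.inr v => H.adj_symm
    | Sum.inl _, Sum.inr _ | Sum.inr _, Sum.inl _ => fun _ => trivial⟩
  loopless := ⟨fun u => by cases u <;> simp⟩

infixl:60 " ∨g " => SimpleGraph.gjoin

/-- The `A_α`-matrix `α • D(G) + (1-α) • A(G)` of a graph `G`. -/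
noncomputable def aAlphaMatrix {V : Type*} [Fintype V] [DecidableEq V]
    (α : ℝ) (G : SimpleGraph V) : Matrix V V ℝ := by
  classical
  exact α • Matrix.diagonal (fun v => (G.degree v : ℝ)) + (1 - α) • G.adjMatrix ℝ

/-- The `A_α`-spectral radius `ρ_α(G)`: the largest eigenvalue of `A_α(G)`. -/
noncomputable def rhoAlpha {V : Type*} [Fintype V] [DecidableEq V]
    (α : ℝ) (G : SimpleGraph V) : ℝ :=
  sSup (spectrum ℝ (aAlphaMatrix α G))

/-- The signless Laplacian matrix `Q(G) = D(G) + A(G)`. -/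
noncomputable def signlessLaplacian {V : Type*} [Fintype V] [DecidableEq V]
    (G : SimpleGraph V) : Matrix V V ℝ := by
  classical
  exact Matrix.diagonal (fun v => (G.degree v : ℝ)) + G.adjMatrix ℝ

/-- `q(G)`: the largest eigenvalue of the signless Laplacian matrix of `G`. -/
noncomputable def qIndex {V : Type*} [Fintype V] [DecidableEq V]
    (G : SimpleGraph V) : ℝ :=
  sSup (spectrum ℝ (signlessLaplacian G))

/-- The number of edges (the size) of a graph. -/
noncomputable def edgeCount {V : Type*} [Fintype V] [DecidableEq V]
    (G : SimpleGraph V) : ℕ := by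
  classical
  exact G.edgeFinset.card

/-- `i(G - S)`: the number of isolated vertices of the graph obtained from `G`
by deleting the vertices of `S` together with all edges incident to `S`. -/
noncomputable def isolGminus {V : Type*} [Fintype V] [DecidableEq V]
    (G : SimpleGraph V) (S : Finset V) : ℕ := by
  classical
  exact (Finset.univ.filter (fun v => v ∉ S ∧ ∀ u, G.Adj v u → u ∈ S)).card

/-- `F(n)`: the edge bound from Theorem 1.1. -/
def Fbound (n : ℕ) : ℕ :=
  if n = 6 then 9 else if n = 8 then 18 else (n - 2).choose 2 + 2

/-- `f(α)`: the order bound from Theorem 1.2. -/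
noncomputable def fAlpha (α : ℝ) : ℝ :=
  if α ≤ 1 / 2 then 20 else if α ≤ 5 / 7 then 25 else 7 / (1 - α) + 3


open SimpleGraph Sum Matrix in
@[simp] lemma gjoin_adj_inl_inl {γ δ : Type*} (G : SimpleGraph γ) (H : SimpleGraph δ) (u v : γ) :
    (G ∨g H).Adj (inl u) (inl v) ↔ G.Adj u v := Iff.rfl

open SimpleGraph Sum Matrix in
@[simp] lemma gjoin_adj_inr_inr {γ δ : Type*} (G : SimpleGraph γ) (H : SimpleGraph δ) (u v : δ) :
    (G ∨g H).Adj (inr u) (inr v) ↔ H.Adj u v := Iff.rfl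

open SimpleGraph Sum Matrix in
@[simp] lemma gjoin_adj_inl_inr {γ δ : Type*} (G : SimpleGraph γ) (H : SimpleGraph δ) (u : γ) (v : δ) :
    (G ∨g H).Adj (inl u) (inr v) := trivial

open SimpleGraph Sum Matrix in
@[simp] lemma gjoin_adj_inr_inl {γ δ : Type*} (G : SimpleGraph γ) (H : SimpleGraph δ) (u : δ) (v : γ) :
    (G ∨g H).Adj (inr u) (inl v) := trivial

lemma degree_cast_eq_sum {V : Type*} [Fintype V] [DecidableEq V] (G : SimpleGraph V) (v : V)
    [Fintype (G.neighborSet v)] [DecidableRel G.Adj] :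
    (G.degree v : ℝ) = ∑ u : V, if G.Adj v u then (1:ℝ) else 0 := by
  rw [Finset.sum_boole]
  norm_cast
  rw [SimpleGraph.degree]
  congr 1
  ext u
  simp [SimpleGraph.mem_neighborFinset]

lemma sum_ite_ne_fin (s : ℕ) (i : Fin s) (c : ℝ) :
    ∑ j : Fin s, (if ¬ i = j then c else 0) = ((s:ℝ) - 1) * c := by
  have h : ∀ j : Fin s, (if ¬ i = j then c else 0) = c - (if i = j then c else 0) := by
    intro j; by_cases h : i = j <;> simp [h]
  simp_rw [h, Finset.sum_sub_distrib, Finset.sum_const, Finset.sum_ite_eq, Finset.mem_univ,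
    if_true, Finset.card_univ, Fintype.card_fin, nsmul_eq_mul]
  ring

open SimpleGraph Sum Matrix in
lemma aux_greatest (α : ℝ) (hα0 : 0 ≤ α) (hα1 : α < 1) (s t : ℕ) (hs : 1 ≤ s) (ht : 1 ≤ t)
    (b c ρ : ℝ)
    (hb : b = α*((s:ℝ)+(t:ℝ)) + (s:ℝ) - 1)
    (hc : c = b*(α*(s:ℝ)) - (α*(s:ℝ))^2 - (s:ℝ)*(t:ℝ)*(1-α)^2)
    (hρ : ρ = (b + Real.sqrt (b^2 - 4*c))/2) :
    IsGreatest (spectrum ℝ (aAlphaMatrix α ((⊤ : SimpleGraph (Fin s)) ∨g (⊥ : SimpleGraph (Fin t))))) ρ := by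
  classical
  set G := ((⊤ : SimpleGraph (Fin s)) ∨g (⊥ : SimpleGraph (Fin t))) with hG
  have hS : (1:ℝ) ≤ (s:ℝ) := by exact_mod_cast hs
  have hT : (1:ℝ) ≤ (t:ℝ) := by exact_mod_cast ht
  have hα1' : 0 < 1 - α := by linarith
  have hDeq : b^2 - 4*c = (b - 2*α*(s:ℝ))^2 + 4*(s:ℝ)*(t:ℝ)*(1-α)^2 := by
    rw [hc]; ring
  have hquad : 0 < 4*(s:ℝ)*(t:ℝ)*(1-α)^2 := by positivity
  have hD0 : 0 < b^2 - 4*c := by nlinarith [sq_nonneg (b - 2*α*(s:ℝ))]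
  have hr : Real.sqrt (b^2 - 4*c) ^ 2 = b^2 - 4*c := Real.sq_sqrt hD0.le
  have hrnn : 0 ≤ Real.sqrt (b^2 - 4*c) := Real.sqrt_nonneg _
  have hρq : ρ^2 - b*ρ + c = 0 := by rw [hρ]; linear_combination hr/4
  have hρs : α*(s:ℝ) < ρ := by
    rw [hρ]
    nlinarith [hr, hrnn, hDeq, hquad, sq_nonneg (Real.sqrt (b^2-4*c) + (2*α*(s:ℝ) - b))]
  -- degrees
  have hdeg1 : ∀ i : Fin s, (G.degree (inl i) : ℝ) = (s:ℝ) - 1 + (t:ℝ) := by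
    intro i
    rw [degree_cast_eq_sum]
    rw [Fintype.sum_sum_type]
    simp only [hG, gjoin_adj_inl_inl, gjoin_adj_inl_inr, SimpleGraph.top_adj, ne_eq, if_true]
    rw [sum_ite_ne_fin]
    simp [mul_comm]
  have hdeg2 : ∀ j : Fin t, (G.degree (inr j) : ℝ) = (s:ℝ) := by
    intro j
    rw [degree_cast_eq_sum]
    rw [Fintype.sum_sum_type]
    simp [hG]
  -- the Perron vector
  set w : (Fin s ⊕ Fin t) → ℝ := Sum.elim (fun _ => ρ - α*(s:ℝ)) (fun _ => (1-α)*(s:ℝ)) with hw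
  have hwpos : ∀ v, 0 < w v := by
    rintro (i | j)
    · simpa [hw] using sub_pos.mpr hρs
    · simp only [hw, Sum.elim_inr]
      positivity
  have hM : aAlphaMatrix α G
      = α • Matrix.diagonal (fun v => (G.degree v : ℝ)) + (1 - α) • G.adjMatrix ℝ := by
    rw [aAlphaMatrix]
  have hMw : aAlphaMatrix α G *ᵥ w = ρ • w := by
    funext v
    rw [hM]
    rw [Matrix.add_mulVec, Pi.add_apply, Matrix.smul_mulVec, Matrix.smul_mulVec,
      Pi.smul_apply, Pi.smul_apply, smul_eq_mul, smul_eq_mul, Matrix.mulVec_diagonal]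
    have hadj : ∀ u, (G.adjMatrix ℝ *ᵥ w) u = ∑ x, (if G.Adj u x then (1:ℝ) else 0) * w x := by
      intro u
      simp [Matrix.mulVec, dotProduct, SimpleGraph.adjMatrix_apply]
    rw [hadj]
    cases v with
    | inl i =>
      rw [hdeg1, Fintype.sum_sum_type]
      simp only [hG, hw, gjoin_adj_inl_inl, gjoin_adj_inl_inr, SimpleGraph.top_adj, ne_eq,
        if_true, Sum.elim_inl, Sum.elim_inr]
      simp_rw [ite_mul, one_mul, zero_mul]
      rw [sum_ite_ne_fin]
      simp only [one_mul, Finset.sum_const, Finset.card_univ, Fintype.card_fin, nsmul_eq_mul,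
        Pi.smul_apply, Sum.elim_inl, smul_eq_mul]
      linear_combination (-1 : ℝ) * hρq + (α*(s:ℝ) - ρ) * hb + hc
    | inr j =>
      rw [hdeg2, Fintype.sum_sum_type]
      simp only [hG, hw, gjoin_adj_inr_inl, gjoin_adj_inr_inr, SimpleGraph.bot_adj,
        if_true, if_false, Sum.elim_inl, Sum.elim_inr]
      simp only [one_mul, Finset.sum_const, Finset.card_univ, Fintype.card_fin, nsmul_eq_mul,
        Pi.smul_apply, Sum.elim_inr, smul_eq_mul, Finset.sum_const_zero, add_zero]
      ring
  -- nonnegativity and symmetry of the matrix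
  have hMnn : ∀ u v, 0 ≤ aAlphaMatrix α G u v := by
    intro u v
    rw [hM]
    simp only [Matrix.add_apply, Matrix.smul_apply, smul_eq_mul, SimpleGraph.adjMatrix_apply,
      Matrix.diagonal_apply]
    have h1 : (0:ℝ) ≤ α * (if u = v then (G.degree u : ℝ) else 0) := by
      by_cases h : u = v
      · simp only [h, if_true]; positivity
      · simp [h]
    have h2 : (0:ℝ) ≤ (1 - α) * (if G.Adj u v then (1:ℝ) else 0) := by
      by_cases h : G.Adj u v
      · simp only [h, if_true]; linarith
      · simp [h]
    exact add_nonneg h1 h2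
  have hMsymm : ∀ u v, aAlphaMatrix α G u v = aAlphaMatrix α G v u := by
    intro u v
    rw [hM]
    by_cases h : u = v
    · subst h; rfl
    · have h' : ¬ v = u := fun hh => h hh.symm
      simp only [Matrix.add_apply, Matrix.smul_apply, smul_eq_mul, SimpleGraph.adjMatrix_apply,
        Matrix.diagonal_apply, if_neg h, if_neg h']
      rw [G.adj_comm]
  -- w is nonzero
  have hwne : w ≠ 0 := by
    intro h0
    have h := hwpos (inl ⟨0, hs⟩)
    rw [h0, Pi.zero_apply] at h
    exact lt_irrefl _ h
  -- ρ is in the spectrum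
  have hmem : ρ ∈ spectrum ℝ (aAlphaMatrix α G) := by
    rw [spectrum.mem_iff]
    intro hunit
    rw [Matrix.isUnit_iff_isUnit_det, isUnit_iff_ne_zero] at hunit
    apply hunit
    rw [← Matrix.exists_mulVec_eq_zero_iff]
    refine ⟨w, hwne, ?_⟩
    rw [Algebra.algebraMap_eq_smul_one, Matrix.sub_mulVec, Matrix.smul_mulVec,
      Matrix.one_mulVec, hMw, sub_self]
  -- upper bound
  have hub : ∀ μ ∈ spectrum ℝ (aAlphaMatrix α G), μ ≤ ρ := by
    intro μ hμ
    rw [spectrum.mem_iff] at hμ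
    rw [Matrix.isUnit_iff_isUnit_det, isUnit_iff_ne_zero, not_not,
      ← Matrix.exists_mulVec_eq_zero_iff] at hμ
    obtain ⟨x, hx0, hx⟩ := hμ
    rw [Algebra.algebraMap_eq_smul_one, Matrix.sub_mulVec, Matrix.smul_mulVec,
      Matrix.one_mulVec, sub_eq_zero] at hx
    -- hx : μ • x = aAlphaMatrix α G *ᵥ x
    set u : (Fin s ⊕ Fin t) → ℝ := fun i => |x i| with hu
    have h1 : ∀ i, |μ| * u i ≤ ∑ j, aAlphaMatrix α G i j * u j := by
      intro i
      have e1 : |μ| * u i = |(aAlphaMatrix α G *ᵥ x) i| := by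
        rw [← hx]; simp [hu, abs_mul]
      rw [e1]
      calc |(aAlphaMatrix α G *ᵥ x) i| = |∑ j, aAlphaMatrix α G i j * x j| := by
            rw [Matrix.mulVec, dotProduct]
        _ ≤ ∑ j, |aAlphaMatrix α G i j * x j| := Finset.abs_sum_le_sum_abs _ _
        _ = ∑ j, aAlphaMatrix α G i j * u j := by
            refine Finset.sum_congr rfl fun j _ => ?_
            rw [abs_mul, abs_of_nonneg (hMnn i j)]
    have h3 : 0 < ∑ i, w i * u i := by
      obtain ⟨i, hi⟩ := Function.ne_iff.mp hx0
      refine Finset.sum_pos' (fun j _ => mul_nonneg (hwpos j).le (abs_nonneg _)) ⟨i, Finset.mem_univ i, ?_⟩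
      exact mul_pos (hwpos i) (abs_pos.mpr (by simpa [hu] using hi))
    have h2 : ∑ i, w i * (∑ j, aAlphaMatrix α G i j * u j) = ρ * ∑ i, w i * u i := by
      calc ∑ i, w i * (∑ j, aAlphaMatrix α G i j * u j)
          = ∑ i, ∑ j, w i * (aAlphaMatrix α G i j * u j) := by
            refine Finset.sum_congr rfl fun i _ => ?_; rw [Finset.mul_sum]
        _ = ∑ j, ∑ i, w i * (aAlphaMatrix α G i j * u j) := Finset.sum_comm
        _ = ∑ j, (∑ i, aAlphaMatrix α G j i * w i) * u j := by
            refine Finset.sum_congr rfl fun j _ => ?_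
            rw [Finset.sum_mul]
            refine Finset.sum_congr rfl fun i _ => ?_
            rw [hMsymm i j]; ring
        _ = ∑ j, (ρ * w j) * u j := by
            refine Finset.sum_congr rfl fun j _ => ?_
            congr 1
            have := congrFun hMw j
            simpa [Matrix.mulVec, dotProduct] using this
        _ = ρ * ∑ j, w j * u j := by
            rw [Finset.mul_sum]; exact Finset.sum_congr rfl fun i _ => by ring
    have h4 : |μ| * ∑ i, w i * u i ≤ ρ * ∑ i, w i * u i := by
      calc |μ| * ∑ i, w i * u i = ∑ i, w i * (|μ| * u i) := by
            rw [Finset.mul_sum]; exact Finset.sum_congr rfl fun i _ => by ring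
        _ ≤ ∑ i, w i * (∑ j, aAlphaMatrix α G i j * u j) :=
            Finset.sum_le_sum fun i _ => mul_le_mul_of_nonneg_left (h1 i) (hwpos i).le
        _ = ρ * ∑ i, w i * u i := h2
    have h5 : |μ| ≤ ρ := le_of_mul_le_mul_right h4 h3
    exact (le_abs_self μ).trans h5
  exact ⟨hmem, hub⟩

theorem rhoAlpha_case21 (α : ℝ) (hα0 : 0 ≤ α) (hα1 : α < 1)
    (s n : ℕ) (hs : 1 ≤ s) (hn : n = s + 3 * s / 2 + 1) :
    IsGreatest {x : ℝ | x ^ 2 - (α * (n : ℝ) + (s : ℝ) - 1) * x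
        + (2 * α - 1) * (s : ℝ) * ((3 * s / 2 : ℕ) : ℝ)
        + α * (s : ℝ) ^ 2 + α * (s : ℝ) - (s : ℝ) = 0}
      (rhoAlpha α ((⊤ : SimpleGraph (Fin s)) ∨g (⊥ : SimpleGraph (Fin (3 * s / 2 + 1))))) ∧
    rhoAlpha α ((⊤ : SimpleGraph (Fin s)) ∨g (⊥ : SimpleGraph (Fin (3 * s / 2 + 1)))) =
      (α * (n : ℝ) + (s : ℝ) - 1 +
        Real.sqrt ((α * (n : ℝ) + (s : ℝ) - 1) ^ 2
          - 4 * ((2 * α - 1) * (s : ℝ) * ((3 * s / 2 : ℕ) : ℝ)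
            + α * (s : ℝ) ^ 2 + α * (s : ℝ) - (s : ℝ)))) / 2 := by
  have ht : 1 ≤ 3 * s / 2 + 1 := Nat.le_add_left 1 _
  have hcast : ((3 * s / 2 + 1 : ℕ) : ℝ) = ((3 * s / 2 : ℕ) : ℝ) + 1 := by push_cast; ring
  have hncast : (n : ℝ) = (s : ℝ) + ((3 * s / 2 : ℕ) : ℝ) + 1 := by rw [hn]; push_cast; ring
  have hb : α * (n:ℝ) + (s:ℝ) - 1 = α * ((s:ℝ) + ((3*s/2+1 : ℕ):ℝ)) + (s:ℝ) - 1 := by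
    rw [hncast, hcast]; ring
  have hc : (2 * α - 1) * (s : ℝ) * ((3 * s / 2 : ℕ) : ℝ)
        + α * (s : ℝ) ^ 2 + α * (s : ℝ) - (s : ℝ)
      = (α * (n:ℝ) + (s:ℝ) - 1) * (α*(s:ℝ)) - (α*(s:ℝ))^2
        - (s:ℝ)*((3*s/2+1 : ℕ):ℝ)*(1-α)^2 := by
    rw [hncast, hcast]; ring
  have hkey := aux_greatest α hα0 hα1 s (3*s/2+1) hs ht
    (α * (n : ℝ) + (s : ℝ) - 1)
    ((2 * α - 1) * (s : ℝ) * ((3 * s / 2 : ℕ) : ℝ)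
      + α * (s : ℝ) ^ 2 + α * (s : ℝ) - (s : ℝ))
    ((α * (n : ℝ) + (s : ℝ) - 1 +
        Real.sqrt ((α * (n : ℝ) + (s : ℝ) - 1) ^ 2
          - 4 * ((2 * α - 1) * (s : ℝ) * ((3 * s / 2 : ℕ) : ℝ)
            + α * (s : ℝ) ^ 2 + α * (s : ℝ) - (s : ℝ)))) / 2)
    hb hc rfl
  have hρeq : rhoAlpha α ((⊤ : SimpleGraph (Fin s)) ∨g (⊥ : SimpleGraph (Fin (3 * s / 2 + 1)))) =
      (α * (n : ℝ) + (s : ℝ) - 1 +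
        Real.sqrt ((α * (n : ℝ) + (s : ℝ) - 1) ^ 2
          - 4 * ((2 * α - 1) * (s : ℝ) * ((3 * s / 2 : ℕ) : ℝ)
            + α * (s : ℝ) ^ 2 + α * (s : ℝ) - (s : ℝ)))) / 2 := hkey.csSup_eq
  refine ⟨?_, hρeq⟩
  rw [hρeq]
  -- discriminant is nonnegative
  have hpos : (0:ℝ) ≤ (s:ℝ) * (((3*s/2 : ℕ):ℝ) + 1) * (1-α)^2 := by positivity
  have hD0 : (0:ℝ) ≤ (α * (n : ℝ) + (s : ℝ) - 1) ^ 2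
      - 4 * ((2 * α - 1) * (s : ℝ) * ((3 * s / 2 : ℕ) : ℝ)
        + α * (s : ℝ) ^ 2 + α * (s : ℝ) - (s : ℝ)) := by
    rw [hc, hcast]
    nlinarith [sq_nonneg (α * (n:ℝ) + (s:ℝ) - 1 - 2*α*(s:ℝ)), hpos]
  constructor
  · show _ ∈ {x : ℝ | _}
    simp only [Set.mem_setOf_eq]
    linear_combination (Real.sq_sqrt hD0) / 4
  · intro x hx
    simp only [Set.mem_setOf_eq] at hx
    have h2 : (2*x - (α * (n : ℝ) + (s : ℝ) - 1))^2
        = (α * (n : ℝ) + (s : ℝ) - 1) ^ 2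
          - 4 * ((2 * α - 1) * (s : ℝ) * ((3 * s / 2 : ℕ) : ℝ)
            + α * (s : ℝ) ^ 2 + α * (s : ℝ) - (s : ℝ)) := by
      linear_combination 4*hx
    have h3 : 2*x - (α * (n : ℝ) + (s : ℝ) - 1)
        ≤ Real.sqrt ((α * (n : ℝ) + (s : ℝ) - 1) ^ 2
          - 4 * ((2 * α - 1) * (s : ℝ) * ((3 * s / 2 : ℕ) : ℝ)
            + α * (s : ℝ) ^ 2 + α * (s : ℝ) - (s : ℝ))) := by
      calc 2*x - (α * (n : ℝ) + (s : ℝ) - 1) ≤ |2*x - (α * (n : ℝ) + (s : ℝ) - 1)| :=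
            le_abs_self _
        _ = Real.sqrt ((2*x - (α * (n : ℝ) + (s : ℝ) - 1))^2) := (Real.sqrt_sq_eq_abs _).symm
        _ = _ := by rw [h2]
    linarith
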